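/- Let 1 < p, q < ∞ and let u, v be weights with v > 0 almost everywhere and (u,v) ∈ Fourier(p,q). Set w = v^{−p'/p}. Then there is a constant C such that for every bounded measurable set E ⊆ ℝⁿ, every μ ∈ ℝⁿ with −μ ∈ E, and every τ ∈ ℝⁿ: u((E+μ)° + τ)^{1/q} · w(E)^{1/p'} ≤ C and u(E)^{1/q} · w((E+μ)° + τ)^{1/p'} ≤ C. -/

import Mathlib

open MeasureTheory ENNReal Set Bornology Pointwise

noncomputable section

abbrev Euc (n : ℕ) := EuclideanSpace ℝ (Fin n)

/-- The Fourier transform `f̂(z) = ∫ f(x) e^{-i x·z} dx`. -/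
def ftrans {n : ℕ} (f : Euc n → ℂ) (z : Euc n) : ℂ :=
  ∫ x : Euc n, f x * Complex.exp (-(Complex.I * ((inner ℝ x z : ℝ) : ℂ)))

/-- A weight: nonnegative, measurable, locally integrable. -/
def IsWeight {n : ℕ} (u : Euc n → ℝ) : Prop :=
  Measurable u ∧ (∀ x, 0 ≤ u x) ∧ LocallyIntegrable u volume

/-- `u(A) = ∫_A u`, as a value in `ℝ≥0∞`. -/
def wMeas {n : ℕ} (u : Euc n → ℝ) (A : Set (Euc n)) : ℝ≥0∞ :=
  ∫⁻ x in A, ENNReal.ofReal (u x)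

/-- The polarSet of a set: `E° = {z : |x·z| ≤ 1 for all x ∈ E}`. -/
def polarSet {n : ℕ} (E : Set (Euc n)) : Set (Euc n) :=
  {z | ∀ x ∈ E, |(inner ℝ x z : ℝ)| ≤ 1}

/-- The setTranslate `E + τ` of a set. -/
def setTranslate {n : ℕ} (τ : Euc n) (E : Set (Euc n)) : Set (Euc n) :=
  (fun x => x + τ) '' E

/-- Conjugate exponent `p' = p/(p-1)`. -/
def rconj (p : ℝ) : ℝ := p / (p - 1)

/-- The weight `w = v^{-p'/p}`. -/
def wFun {n : ℕ} (p : ℝ) (v : Euc n → ℝ) : Euc n → ℝ :=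
  fun x => v x ^ (-(rconj p) / p)

/-- The weighted Fourier inequality class `Fourier(p,q)`. -/
def FourierPQ {n : ℕ} (p q : ℝ) (u v : Euc n → ℝ) : Prop :=
  ∃ C : ℝ, 0 < C ∧ ∀ f : Euc n → ℂ, Integrable f →
    (∫⁻ z, (‖ftrans f z‖₊ : ℝ≥0∞) ^ q * ENNReal.ofReal (u z)) ^ (1/q) ≤
      ENNReal.ofReal C * (∫⁻ x, (‖f x‖₊ : ℝ≥0∞) ^ p * ENNReal.ofReal (v x)) ^ (1/p)

/-- Axis-parallel cube with center `c` and half-side `r`. -/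
def axisCube {n : ℕ} (c : Euc n) (r : ℝ) : Set (Euc n) :=
  {x | ∀ i, |x i - c i| ≤ r}

/-- An axis-parallel cube. -/
def IsCube {n : ℕ} (Q : Set (Euc n)) : Prop :=
  ∃ (c : Euc n) (r : ℝ), 0 < r ∧ Q = axisCube c r

/-- Comparability of measures: `(μ₁,μ₂) ∈ C(δ)`. -/
def Compar {n : ℕ} (μ₁ μ₂ : Measure (Euc n)) (δ : ℝ) : Prop :=
  ∃ C : ℝ, 0 < C ∧ ∀ Q : Set (Euc n), IsCube Q → ∀ E ⊆ Q, MeasurableSet E →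
    μ₁ E * μ₂ Q ^ δ ≤ ENNReal.ofReal C * (μ₁ Q * μ₂ E ^ δ)

/-- A doubling measure. -/
def Doubling {n : ℕ} (μ : Measure (Euc n)) : Prop :=
  ∃ C : ℝ, 0 < C ∧ ∀ (c : Euc n) (r : ℝ), 0 < r →
    μ (axisCube c (2 * r)) ≤ ENNReal.ofReal C * μ (axisCube c r)

/-- `(u, |·|) ∈ C(δ)`. -/
def ComparWL {n : ℕ} (u : Euc n → ℝ) (δ : ℝ) : Prop :=
  ∃ C : ℝ, 0 < C ∧ ∀ Q : Set (Euc n), IsCube Q → ∀ E ⊆ Q, MeasurableSet E →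
    wMeas u E * volume Q ^ δ ≤ ENNReal.ofReal C * (wMeas u Q * volume E ^ δ)

/-- `(|·|, v) ∈ C(δ)`. -/
def ComparLW {n : ℕ} (v : Euc n → ℝ) (δ : ℝ) : Prop :=
  ∃ C : ℝ, 0 < C ∧ ∀ Q : Set (Euc n), IsCube Q → ∀ E ⊆ Q, MeasurableSet E →
    volume E * wMeas v Q ^ δ ≤ ENNReal.ofReal C * (volume Q * wMeas v E ^ δ)

/-- The class `N_Q(p,q)`. -/
def NQ {n : ℕ} (p q : ℝ) (u v : Euc n → ℝ) : Prop :=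
  ∃ C : ℝ, 0 < C ∧ ∀ Q : Set (Euc n), IsCube Q → ∀ μ : Euc n, -μ ∈ Q → ∀ τ : Euc n,
    wMeas u Q ^ (1/q) * wMeas (wFun p v) (setTranslate τ (polarSet (setTranslate μ Q))) ^ (1 / rconj p)
        ≤ ENNReal.ofReal C ∧
    wMeas u (setTranslate τ (polarSet (setTranslate μ Q))) ^ (1/q) * wMeas (wFun p v) Q ^ (1 / rconj p)
        ≤ ENNReal.ofReal C

/-- The class `N_{Q'}(p,q)`. -/
def NQ' {n : ℕ} (p q : ℝ) (u v : Euc n → ℝ) : Prop :=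
  ∃ C : ℝ, 0 < C ∧ ∀ Q : Set (Euc n), IsCube Q → ∀ μ : Euc n, -μ ∈ Q → ∀ τ : Euc n,
    wMeas u Q ^ (1/q) * volume (polarSet Q)
        ≤ ENNReal.ofReal C * wMeas v (setTranslate τ (polarSet (setTranslate μ Q))) ^ (1/p) ∧
    wMeas u (setTranslate τ (polarSet (setTranslate μ Q))) ^ (1/q) * volume Q
        ≤ ENNReal.ofReal C * wMeas v Q ^ (1/p)

/-- A rectanguloid centered at the origin. -/
def IsRectanguloid0 {n : ℕ} (R : Set (Euc n)) : Prop :=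
  ∃ (b : OrthonormalBasis (Fin n) ℝ (Euc n)) (a : Fin n → ℝ),
    (∀ i, 0 < a i) ∧ R = {x | ∀ i, |(inner ℝ x (b i) : ℝ)| ≤ a i}

/-- An ellipsoid centered at the origin. -/
def IsEllipsoid0 {n : ℕ} (S : Set (Euc n)) : Prop :=
  ∃ T : Euc n ≃ₗ[ℝ] Euc n, S = ⇑T '' Metric.closedBall 0 1



lemma supMul {a : ℕ → ℝ≥0∞} {b c : ℝ≥0∞} {r : ℝ} (hr : 0 < r)
    (hc : c ≠ ∞) (h : ∀ k, (a k) ^ r * b ≤ c) :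
    (⨆ k, a k) ^ r * b ≤ c := by
  rcases eq_or_ne b 0 with hb | hb
  · simp [hb]
  rcases eq_or_ne b ∞ with hbt | hbt
  · have ha : ∀ k, a k = 0 := by
      intro k
      by_contra hk
      have h1 : (a k) ^ r ≠ 0 := by
        simp [ENNReal.rpow_eq_zero_iff, hk, hr, not_lt.2 hr.le]
      have : (a k) ^ r * b = ∞ := by
        rw [hbt, ENNReal.mul_top h1]
      exact hc (top_le_iff.1 (this ▸ h k))
    simp [ha, ENNReal.zero_rpow_of_pos hr]
  · have h2 : ∀ k, a k ≤ (c / b) ^ (1 / r) := by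
      intro k
      have h3 : (a k) ^ r ≤ c / b :=
        (ENNReal.le_div_iff_mul_le (Or.inl hb) (Or.inl hbt)).2 (h k)
      have := ENNReal.rpow_le_rpow h3 (by positivity : (0:ℝ) ≤ 1 / r)
      rwa [← ENNReal.rpow_mul, mul_one_div, div_self hr.ne', ENNReal.rpow_one] at this
    have h4 : (⨆ k, a k) ^ r ≤ c / b := by
      have := ENNReal.rpow_le_rpow (iSup_le h2) hr.le
      rwa [← ENNReal.rpow_mul, one_div, inv_mul_cancel₀ hr.ne', ENNReal.rpow_one] at this
    exact (ENNReal.le_div_iff_mul_le (Or.inl hb) (Or.inl hbt)).1 h4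

lemma polar_closed {n : ℕ} (E : Set (Euc n)) : IsClosed (polarSet E) := by
  have : polarSet E = ⋂ x ∈ E, {z : Euc n | |(inner ℝ x z : ℝ)| ≤ 1} := by
    ext z; simp [polarSet]
  rw [this]
  refine isClosed_biInter fun x _ => ?_
  exact isClosed_le ((continuous_const.inner continuous_id).abs) continuous_const

lemma translate_eq_preimage {n : ℕ} (τ : Euc n) (S : Set (Euc n)) :
    setTranslate τ S = (fun y => y - τ) ⁻¹' S := by
  ext y
  simp only [setTranslate, mem_image, mem_preimage]
  constructor
  · rintro ⟨x, hx, rfl⟩; simpa using hx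
  · intro hy; exact ⟨y - τ, hy, by abel⟩

lemma translate_closed {n : ℕ} (τ : Euc n) {S : Set (Euc n)} (hS : IsClosed S) :
    IsClosed (setTranslate τ S) := by
  rw [translate_eq_preimage]
  exact hS.preimage (continuous_id.sub continuous_const)

lemma ft_lower {n : ℕ} {A : Set (Euc n)} (hA : MeasurableSet A)
    {w : Euc n → ℝ} (hw : Measurable w) (hwnn : ∀ x, 0 ≤ w x)
    (hwint : IntegrableOn w A) (ζ z : Euc n) (θ : ℝ)
    (hθ : ∀ x ∈ A, |(inner ℝ x z : ℝ) - (inner ℝ x ζ : ℝ) - θ| ≤ 1) :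
    Real.cos 1 * ∫ x in A, w x ≤
      ‖ftrans (A.indicator fun x => (w x : ℂ) * Complex.exp (Complex.I * ((inner ℝ x ζ : ℝ) : ℂ))) z‖ := by
  set c : Euc n → ℝ := fun x => (inner ℝ x z : ℝ) - (inner ℝ x ζ : ℝ) - θ with hc
  set f := A.indicator fun x => (w x : ℂ) * Complex.exp (Complex.I * ((inner ℝ x ζ : ℝ) : ℂ)) with hf
  have hcont1 : Continuous fun x : Euc n => (inner ℝ x ζ : ℝ) := continuous_id.inner continuous_const
  have hcont2 : Continuous fun x : Euc n => (inner ℝ x z : ℝ) := continuous_id.inner continuous_const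
  have hc_meas : Measurable c := ((hcont2.sub hcont1).sub continuous_const).measurable
  -- step 1: express e^{θ i} * ftrans f z as an integral over A
  have h1 : Complex.exp (θ * Complex.I) * ftrans f z
      = ∫ x in A, (w x : ℂ) * Complex.exp (((-(c x) : ℝ) : ℂ) * Complex.I) := by
    have e1 : ftrans f z = ∫ x in A,
        (w x : ℂ) * Complex.exp (Complex.I * ((inner ℝ x ζ : ℝ) : ℂ))
          * Complex.exp (-(Complex.I * ((inner ℝ x z : ℝ) : ℂ))) := by
      rw [ftrans, ← integral_indicator hA]
      congr 1; funext x
      by_cases hx : x ∈ A <;> simp [hf, hx]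
    rw [e1, ← integral_const_mul]
    congr 1; funext x
    rw [show Complex.exp (θ * Complex.I) *
        ((w x : ℂ) * Complex.exp (Complex.I * ((inner ℝ x ζ : ℝ) : ℂ))
          * Complex.exp (-(Complex.I * ((inner ℝ x z : ℝ) : ℂ))))
        = (w x : ℂ) * (Complex.exp (θ * Complex.I) * Complex.exp (Complex.I * ((inner ℝ x ζ : ℝ) : ℂ))
          * Complex.exp (-(Complex.I * ((inner ℝ x z : ℝ) : ℂ)))) from by ring,
      ← Complex.exp_add, ← Complex.exp_add]
    congr 1
    push_cast [hc]
    ring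
  have hInt2 : IntegrableOn (fun x => (w x : ℂ) * Complex.exp (((-(c x) : ℝ) : ℂ) * Complex.I)) A := by
    refine Integrable.mono' hwint ?_ ?_
    · exact (Measurable.mul (Complex.measurable_ofReal.comp hw)
        (Complex.measurable_exp.comp ((Complex.measurable_ofReal.comp hc_meas.neg).mul_const _))).aestronglyMeasurable
    · filter_upwards with x
      rw [norm_mul, Complex.norm_exp_ofReal_mul_I]
      simp [_root_.abs_of_nonneg (hwnn x)]
  have hre : ∀ x, ((w x : ℂ) * Complex.exp (((-(c x) : ℝ) : ℂ) * Complex.I)).re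
      = w x * Real.cos (c x) := by
    intro x
    rw [Complex.re_ofReal_mul, Complex.exp_ofReal_mul_I_re, Real.cos_neg]
  have h3 : (∫ x in A, (w x : ℂ) * Complex.exp (((-(c x) : ℝ) : ℂ) * Complex.I)).re
      = ∫ x in A, w x * Real.cos (c x) := by
    have h := integral_re hInt2
    simp only [RCLike.re_to_complex] at h
    rw [← h]
    congr 1; funext x
    exact hre x
  have h4 : ∫ x in A, w x * Real.cos 1 ≤ ∫ x in A, w x * Real.cos (c x) := by
    refine integral_mono_of_nonneg ?_ ?_ ?_
    · filter_upwards with x using mul_nonneg (hwnn x)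
        (Real.cos_nonneg_of_mem_Icc (by constructor <;> nlinarith [Real.pi_gt_three]))
    · have h := hInt2.re
      simp only [RCLike.re_to_complex] at h
      refine h.congr ?_
      filter_upwards with x using (hre x)
    · filter_upwards [ae_restrict_mem hA] with x hx
      have h5 : |c x| ≤ 1 := hθ x hx
      have h6 : Real.cos 1 ≤ Real.cos (c x) := by
        rw [← Real.cos_abs (c x)]
        exact Real.cos_le_cos_of_nonneg_of_le_pi (abs_nonneg _) (by nlinarith [Real.pi_gt_three]) h5
      exact mul_le_mul_of_nonneg_left h6 (hwnn x)
  have h7 : (∫ x in A, (w x : ℂ) * Complex.exp (((-(c x) : ℝ) : ℂ) * Complex.I)).re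
      ≤ ‖ftrans f z‖ := by
    calc _ ≤ ‖∫ x in A, (w x : ℂ) * Complex.exp (((-(c x) : ℝ) : ℂ) * Complex.I)‖ :=
        Complex.re_le_norm _
      _ = ‖Complex.exp (θ * Complex.I) * ftrans f z‖ := by rw [h1]
      _ = ‖ftrans f z‖ := by
        rw [norm_mul, Complex.norm_exp_ofReal_mul_I, one_mul]
  calc Real.cos 1 * ∫ x in A, w x = ∫ x in A, w x * Real.cos 1 := by
        rw [integral_mul_const]; ring
    _ ≤ ∫ x in A, w x * Real.cos (c x) := h4
    _ ≤ ‖ftrans f z‖ := h3 ▸ h7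

lemma coreFinite {n : ℕ} {p q : ℝ} (hp : 1 < p) (hq : 1 < q)
    {u v : Euc n → ℝ} (hu : IsWeight u) (hv : IsWeight v)
    (hvpos : ∀ᵐ x ∂(volume : Measure (Euc n)), 0 < v x)
    {C₀ : ℝ}
    (hF : ∀ f : Euc n → ℂ, Integrable f →
      (∫⁻ z, (‖ftrans f z‖₊ : ℝ≥0∞) ^ q * ENNReal.ofReal (u z)) ^ (1/q) ≤
        ENNReal.ofReal C₀ * (∫⁻ x, (‖f x‖₊ : ℝ≥0∞) ^ p * ENNReal.ofReal (v x)) ^ (1/p))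
    {A B : Set (Euc n)} (hA : MeasurableSet A) (hB : MeasurableSet B)
    (hwint : IntegrableOn (wFun p v) A)
    (ζ : Euc n)
    (hGC : ∀ z ∈ B, ∃ θ : ℝ, ∀ x ∈ A, |(inner ℝ x z : ℝ) - (inner ℝ x ζ : ℝ) - θ| ≤ 1) :
    wMeas u B ^ (1/q) * wMeas (wFun p v) A ^ (1/rconj p)
      ≤ ENNReal.ofReal (C₀ / Real.cos 1) := by
  have hp0 : (0:ℝ) < p := lt_trans one_pos hp
  have hq0 : (0:ℝ) < q := lt_trans one_pos hq
  have hp1 : p - 1 ≠ 0 := by linarith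
  have hrc : 0 < rconj p := div_pos hp0 (by linarith)
  set w := wFun p v with hwdef
  have hwnn : ∀ x, 0 ≤ w x := fun x => Real.rpow_nonneg (hv.2.1 x) _
  have hwmeas : Measurable w := by
    have := hv.1
    unfold w
    unfold wFun
    fun_prop
  set g : Euc n → ℂ := fun x => (w x : ℂ) * Complex.exp (Complex.I * ((inner ℝ x ζ : ℝ) : ℂ)) with hg
  set f := A.indicator g with hf
  have hgnorm : ∀ x, ‖g x‖ = w x := by
    intro x
    rw [hg, norm_mul]
    rw [show Complex.I * ((inner ℝ x ζ : ℝ) : ℂ) = ((inner ℝ x ζ : ℝ) : ℂ) * Complex.I from by ring,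
      Complex.norm_exp_ofReal_mul_I]
    simp [_root_.abs_of_nonneg (hwnn x)]
  have hgmeas : Measurable g := by
    apply Measurable.mul (Complex.measurable_ofReal.comp hwmeas)
    apply Complex.measurable_exp.comp
    exact (Measurable.const_mul (Complex.measurable_ofReal.comp
      (continuous_id.inner continuous_const).measurable) _)
  have hgint : IntegrableOn g A := by
    refine Integrable.mono' hwint hgmeas.aestronglyMeasurable ?_
    filter_upwards with x using le_of_eq (hgnorm x)
  have hf_int : Integrable f := hgint.integrable_indicator hA
  set W := wMeas w A with hW
  have hWne : W ≠ ∞ := by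
    have h := (hasFiniteIntegral_iff_ofReal (by filter_upwards with x using hwnn x)).1
      hwint.hasFiniteIntegral
    exact h.ne
  have hIeq : ENNReal.ofReal (∫ x in A, w x) = W := by
    rw [integral_eq_lintegral_of_nonneg_ae (by filter_upwards with x using hwnn x)
      hwmeas.aestronglyMeasurable.restrict]
    exact ENNReal.ofReal_toReal hWne
  have hRHS : (∫⁻ x, (‖f x‖₊ : ℝ≥0∞) ^ p * ENNReal.ofReal (v x)) = W := by
    have e1 : (fun x => (‖f x‖₊ : ℝ≥0∞) ^ p * ENNReal.ofReal (v x))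
        = A.indicator (fun x => (ENNReal.ofReal (w x)) ^ p * ENNReal.ofReal (v x)) := by
      funext x
      by_cases hx : x ∈ A
      · rw [hf, indicator_of_mem hx, indicator_of_mem hx]
        congr 2
        rw [← enorm_eq_nnnorm, ← ofReal_norm, hgnorm x]
      · rw [hf, indicator_of_notMem hx, indicator_of_notMem hx]
        simp [ENNReal.zero_rpow_of_pos hp0]
    rw [e1, lintegral_indicator hA]
    have e2 : ∀ᵐ x ∂(volume.restrict A),
        (ENNReal.ofReal (w x)) ^ p * ENNReal.ofReal (v x) = ENNReal.ofReal (w x) := by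
      filter_upwards [ae_restrict_of_ae hvpos] with x hvx
      have hwx : 0 < w x := Real.rpow_pos_of_pos hvx _
      rw [ENNReal.ofReal_rpow_of_pos hwx,
        ← ENNReal.ofReal_mul (Real.rpow_nonneg (hwnn x) p)]
      congr 1
      rw [hwdef]
      unfold wFun
      rw [← Real.rpow_mul hvx.le, ← Real.rpow_add_one hvx.ne']
      congr 1
      rw [rconj]
      field_simp
      ring
    exact lintegral_congr_ae e2
  set I₀ := Real.cos 1 * ∫ x in A, w x with hI
  have hkey : ∀ z ∈ B, ENNReal.ofReal I₀ ≤ (‖ftrans f z‖₊ : ℝ≥0∞) := by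
    intro z hz
    obtain ⟨θ, hθ⟩ := hGC z hz
    rw [← enorm_eq_nnnorm, ← ofReal_norm]
    exact ENNReal.ofReal_le_ofReal (ft_lower hA hwmeas hwnn hwint ζ z θ hθ)
  have hLHS : ENNReal.ofReal I₀ * wMeas u B ^ (1/q)
      ≤ (∫⁻ z, (‖ftrans f z‖₊ : ℝ≥0∞) ^ q * ENNReal.ofReal (u z)) ^ (1/q) := by
    have step : (ENNReal.ofReal I₀) ^ q * wMeas u B
        ≤ ∫⁻ z, (‖ftrans f z‖₊ : ℝ≥0∞) ^ q * ENNReal.ofReal (u z) := by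
      calc (ENNReal.ofReal I₀) ^ q * wMeas u B
          = ∫⁻ z in B, (ENNReal.ofReal I₀) ^ q * ENNReal.ofReal (u z) := by
            rw [wMeas, lintegral_const_mul _ hu.1.ennreal_ofReal]
        _ ≤ ∫⁻ z in B, (‖ftrans f z‖₊ : ℝ≥0∞) ^ q * ENNReal.ofReal (u z) := by
            refine lintegral_mono_ae ?_
            filter_upwards [ae_restrict_mem hB] with z hz
            exact mul_le_mul_left (ENNReal.rpow_le_rpow (hkey z hz) hq0.le) _
        _ ≤ _ := setLIntegral_le_lintegral _ _
    have h2 := ENNReal.rpow_le_rpow step (by positivity : (0:ℝ) ≤ 1/q)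
    rwa [ENNReal.mul_rpow_of_nonneg _ _ (by positivity : (0:ℝ) ≤ 1/q),
      ← ENNReal.rpow_mul, mul_one_div, div_self hq0.ne', ENNReal.rpow_one] at h2
  have hmain : ENNReal.ofReal I₀ * wMeas u B ^ (1/q) ≤ ENNReal.ofReal C₀ * W ^ (1/p) := by
    have h := hF f hf_int
    rw [hRHS] at h
    exact hLHS.trans h
  have hcos : 0 < Real.cos 1 := Real.cos_one_pos
  have hI₀ : ENNReal.ofReal I₀ = ENNReal.ofReal (Real.cos 1) * W := by
    rw [hI, ENNReal.ofReal_mul hcos.le, hIeq]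
  rcases eq_or_ne W 0 with hW0 | hW0
  · rw [hW0, ENNReal.zero_rpow_of_pos (by positivity : (0:ℝ) < 1/rconj p), mul_zero]
    exact zero_le'
  · have hexp : 1/p + 1/rconj p = 1 := by
      rw [rconj]
      field_simp
      ring
    have hWsplit : W = W ^ (1/p) * W ^ (1/rconj p) := by
      rw [← ENNReal.rpow_add _ _ hW0 hWne, hexp, ENNReal.rpow_one]
    set t := W ^ (1/p) with ht
    have ht0 : t ≠ 0 := by
      rw [ht]
      simp [ENNReal.rpow_eq_zero_iff, hW0, hWne]
    have htne : t ≠ ∞ := by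
      rw [ht, Ne, ENNReal.rpow_eq_top_iff]
      simp [hW0, hWne]
    rw [ENNReal.ofReal_div_of_pos hcos,
      ENNReal.le_div_iff_mul_le (Or.inl (by simp [hcos] : ENNReal.ofReal (Real.cos 1) ≠ 0))
        (Or.inl ENNReal.ofReal_ne_top),
      ← ENNReal.mul_le_mul_iff_left ht0 htne]
    calc wMeas u B ^ (1/q) * W ^ (1/rconj p) * ENNReal.ofReal (Real.cos 1) * t
        = (ENNReal.ofReal (Real.cos 1) * (t * W ^ (1/rconj p))) * wMeas u B ^ (1/q) := by ring
      _ = ENNReal.ofReal I₀ * wMeas u B ^ (1/q) := by rw [hI₀, ht, ← hWsplit]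
      _ ≤ ENNReal.ofReal C₀ * W ^ (1/p) := hmain
      _ = ENNReal.ofReal C₀ * t := by rw [ht]

lemma wMeas_iUnion_mono {n : ℕ} (u : Euc n → ℝ) {s : ℕ → Set (Euc n)}
    (hmeas : ∀ k, MeasurableSet (s k)) (hmono : Monotone s) :
    wMeas u (⋃ k, s k) = ⨆ k, wMeas u (s k) := by
  have h1 : ∀ S : Set (Euc n), MeasurableSet S →
      wMeas u S = (volume.withDensity fun x => ENNReal.ofReal (u x)) S := by
    intro S hS
    rw [withDensity_apply _ hS]
    rfl
  rw [h1 _ (MeasurableSet.iUnion hmeas), Directed.measure_iUnion hmono.directed_le]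
  exact iSup_congr fun k => (h1 _ (hmeas k)).symm


lemma master {n : ℕ} {p q : ℝ} (hp : 1 < p) (hq : 1 < q)
    {u v : Euc n → ℝ} (hu : IsWeight u) (hv : IsWeight v)
    (hvpos : ∀ᵐ x ∂(volume : Measure (Euc n)), 0 < v x)
    {C₀ : ℝ}
    (hF : ∀ f : Euc n → ℂ, Integrable f →
      (∫⁻ z, (‖ftrans f z‖₊ : ℝ≥0∞) ^ q * ENNReal.ofReal (u z)) ^ (1/q) ≤
        ENNReal.ofReal C₀ * (∫⁻ x, (‖f x‖₊ : ℝ≥0∞) ^ p * ENNReal.ofReal (v x)) ^ (1/p))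
    {A B : Set (Euc n)} (hA : MeasurableSet A) (hB : MeasurableSet B)
    (ζ : Euc n)
    (hGC : ∀ z ∈ B, ∃ θ : ℝ, ∀ x ∈ A, |(inner ℝ x z : ℝ) - (inner ℝ x ζ : ℝ) - θ| ≤ 1) :
    wMeas u B ^ (1/q) * wMeas (wFun p v) A ^ (1/rconj p)
      ≤ ENNReal.ofReal (C₀ / Real.cos 1) := by
  have hp0 : (0:ℝ) < p := lt_trans one_pos hp
  have hq0 : (0:ℝ) < q := lt_trans one_pos hq
  have hrc : 0 < rconj p := div_pos hp0 (by linarith)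
  set w := wFun p v with hwdef
  have hwnn : ∀ x, 0 ≤ w x := fun x => Real.rpow_nonneg (hv.2.1 x) _
  have hwmeas : Measurable w := by
    have := hv.1
    unfold w
    unfold wFun
    fun_prop
  set Ak : ℕ → Set (Euc n) := fun k => A ∩ {x | w x ≤ k} ∩ Metric.closedBall 0 k with hAk
  set Bj : ℕ → Set (Euc n) := fun j => B ∩ Metric.closedBall 0 j with hBj
  have hAkm : ∀ k, MeasurableSet (Ak k) := fun k =>
    (hA.inter (hwmeas measurableSet_Iic)).inter Metric.isClosed_closedBall.measurableSet
  have hBjm : ∀ j, MeasurableSet (Bj j) := fun j =>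
    hB.inter Metric.isClosed_closedBall.measurableSet
  have hAkmono : Monotone Ak := by
    intro k l hkl x hx
    have hc : (k:ℝ) ≤ l := Nat.cast_le.2 hkl
    exact ⟨⟨hx.1.1, le_trans hx.1.2 hc⟩, Metric.closedBall_subset_closedBall hc hx.2⟩
  have hBjmono : Monotone Bj := by
    intro k l hkl x hx
    exact ⟨hx.1, Metric.closedBall_subset_closedBall (by exact_mod_cast hkl) hx.2⟩
  have hAkU : (⋃ k, Ak k) = A := by
    apply Subset.antisymm
    · exact iUnion_subset fun k => fun x hx => hx.1.1
    · intro x hx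
      refine mem_iUnion.2 ⟨max ⌈w x⌉₊ ⌈‖x‖⌉₊, ⟨hx, ?_⟩, ?_⟩
      · exact le_trans (Nat.le_ceil _) ((Nat.cast_le (α := ℝ)).2 (le_max_left _ _))
      · rw [Metric.mem_closedBall, dist_zero_right]
        exact le_trans (Nat.le_ceil _) ((Nat.cast_le (α := ℝ)).2 (le_max_right _ _))
  have hBjU : (⋃ j, Bj j) = B := by
    apply Subset.antisymm
    · exact iUnion_subset fun j => fun x hx => hx.1
    · intro x hx
      refine mem_iUnion.2 ⟨⌈‖x‖⌉₊, hx, ?_⟩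
      rw [Metric.mem_closedBall, dist_zero_right]
      exact Nat.le_ceil _
  have hperk : ∀ j k, wMeas u (Bj j) ^ (1/q) * wMeas w (Ak k) ^ (1/rconj p)
      ≤ ENNReal.ofReal (C₀ / Real.cos 1) := by
    intro j k
    refine coreFinite hp hq hu hv hvpos hF (hAkm k) (hBjm j) ?_ ζ ?_
    · refine Measure.integrableOn_of_bounded (M := k) ?_ hwmeas.aestronglyMeasurable ?_
      · exact ne_of_lt (lt_of_le_of_lt (measure_mono fun x hx => hx.2)
          (measure_closedBall_lt_top))
      · filter_upwards [ae_restrict_mem (hAkm k)] with x hx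
        rw [Real.norm_eq_abs, _root_.abs_of_nonneg (hwnn x)]
        exact hx.1.2
    · intro z hz
      obtain ⟨θ, hθ⟩ := hGC z hz.1
      exact ⟨θ, fun x hx => hθ x hx.1.1⟩
  rw [← hAkU, ← hBjU, wMeas_iUnion_mono u hBjm hBjmono, wMeas_iUnion_mono w hAkm hAkmono]
  apply supMul (by positivity) ENNReal.ofReal_ne_top
  intro j
  rw [mul_comm]
  apply supMul (by positivity) ENNReal.ofReal_ne_top
  intro k
  rw [mul_comm]
  exact hperk j k


theorem stmt3 (n : ℕ) (hn : 1 ≤ n) (p q : ℝ) (hp : 1 < p) (hq : 1 < q)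
    (u v : Euc n → ℝ) (hu : IsWeight u) (hv : IsWeight v)
    (hvpos : ∀ᵐ x ∂(volume : Measure (Euc n)), 0 < v x)
    (hF : FourierPQ p q u v) :
    ∃ C : ℝ, 0 < C ∧ ∀ E : Set (Euc n), IsBounded E → MeasurableSet E →
      ∀ μ : Euc n, -μ ∈ E → ∀ τ : Euc n,
      wMeas u (setTranslate τ (polarSet (setTranslate μ E))) ^ (1/q) * wMeas (wFun p v) E ^ (1 / rconj p)
          ≤ ENNReal.ofReal C ∧
      wMeas u E ^ (1/q) * wMeas (wFun p v) (setTranslate τ (polarSet (setTranslate μ E))) ^ (1 / rconj p)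
          ≤ ENNReal.ofReal C := by
  obtain ⟨C₀, hC₀, hFf⟩ := hF
  refine ⟨C₀ / Real.cos 1, div_pos hC₀ Real.cos_one_pos, ?_⟩
  intro E hEb hEm μ hμ τ
  have hPm : MeasurableSet (setTranslate τ (polarSet (setTranslate μ E))) :=
    (translate_closed τ (polar_closed _)).measurableSet
  constructor
  · -- B = P, A = E, ζ = τ
    refine master hp hq hu hv hvpos hFf hEm hPm τ ?_
    rintro z ⟨s, hs, rfl⟩
    refine ⟨-(inner ℝ μ s : ℝ), fun x hx => ?_⟩
    have h1 : |(inner ℝ (x + μ) s : ℝ)| ≤ 1 := hs (x + μ) ⟨x, hx, rfl⟩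
    have h2 : (inner ℝ x (s + τ) : ℝ) - (inner ℝ x τ : ℝ) - (-(inner ℝ μ s : ℝ))
        = (inner ℝ (x + μ) s : ℝ) := by
      rw [inner_add_right, inner_add_left]
      ring
    rw [h2]
    exact h1
  · -- B = E, A = P, ζ = -μ
    refine master hp hq hu hv hvpos hFf hPm hEm (-μ) ?_
    intro z hz
    refine ⟨(inner ℝ τ z : ℝ) + (inner ℝ τ μ : ℝ), ?_⟩
    rintro x ⟨s, hs, rfl⟩
    have h1 : |(inner ℝ (z + μ) s : ℝ)| ≤ 1 := hs (z + μ) ⟨z, hz, rfl⟩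
    have h2 : (inner ℝ (s + τ) z : ℝ) - (inner ℝ (s + τ) (-μ) : ℝ)
        - ((inner ℝ τ z : ℝ) + (inner ℝ τ μ : ℝ)) = (inner ℝ (z + μ) s : ℝ) := by
      rw [inner_add_left, inner_add_left, inner_neg_right, inner_neg_right, inner_add_left,
        real_inner_comm z s, real_inner_comm μ s]
      ring
    rw [h2]
    exact h1
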